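/- The monoid of polynomials in ℤ[X] with nonnegative integer coefficients is not half-factorial: the polynomial (1 + X^3 + X^5 + X^6)(1 + X + X^2 + X^4) admits one factorization into 2 irreducibles and another into 3 irreducibles of this monoid. -/

import Mathlib

open Polynomial

def NNcoeff (P : Polynomial ℤ) : Prop := ∀ n, 0 ≤ P.coeff n

lemma nn_eval1_nonneg (P : ℤ[X]) (h : NNcoeff P) : 0 ≤ P.eval 1 := by
  rw [eval_eq_sum]
  exact Finset.sum_nonneg fun i _ => by simpa using h i

lemma nn_eval1_zero (P : ℤ[X]) (h : NNcoeff P) (h1 : P.eval 1 = 0) : P = 0 := by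
  rw [eval_eq_sum, Polynomial.sum] at h1
  have := (Finset.sum_eq_zero_iff_of_nonneg (fun i _ => by simpa using h i)).mp h1
  ext n
  by_cases hn : n ∈ P.support
  · simpa using this n hn
  · simpa using notMem_support_iff.mp hn

lemma nn_eq_one (S : ℤ[X]) (hS : NNcoeff S) (h0 : S.coeff 0 = 1) (h1 : S.eval 1 = 1) :
    S = 1 := by
  have hNN : NNcoeff (S - 1) := by
    intro n
    rcases Nat.eq_zero_or_pos n with rfl | hn
    · simp [h0]
    · have : (1 : ℤ[X]).coeff n = 0 := by
        simp [coeff_one]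
        omega
      simp [coeff_sub, this]
      exact hS n
  have := nn_eval1_zero (S - 1) hNN (by simp [h1])
  have : S = 1 := by linear_combination (norm := ring_nf) this
  exact this

lemma nn_eq_one_add_pow (S : ℤ[X]) (hS : NNcoeff S) (h0 : S.coeff 0 = 1)
    (h1 : S.eval 1 = 2) : ∃ m, 1 ≤ m ∧ S = 1 + X ^ m := by
  set T : ℤ[X] := S - 1 with hT
  have hNNT : NNcoeff T := by
    intro n
    rcases Nat.eq_zero_or_pos n with rfl | hn
    · simp [hT, h0]
    · have h1n : (1 : ℤ[X]).coeff n = 0 := by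
        simp [coeff_one]; omega
      simp [hT, coeff_sub, h1n]
      exact hS n
  have hTe : T.eval 1 = 1 := by simp [hT, h1]
  have hT0 : T ≠ 0 := by
    intro h; rw [h] at hTe; simp at hTe
  -- sum over support = 1
  have hsum : ∑ i ∈ T.support, T.coeff i = 1 := by
    rw [eval_eq_sum, Polynomial.sum] at hTe
    simpa using hTe
  have hcard : T.support.card = 1 := by
    have hle : (T.support.card : ℤ) * 1 ≤ ∑ i ∈ T.support, T.coeff i := by
      rw [Finset.cast_card, Finset.sum_mul]
      simp only [one_mul]
      refine Finset.sum_le_sum fun i hi => ?_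
      have := hNNT i
      have := mem_support_iff.mp hi
      omega
    have hpos : 0 < T.support.card := Finset.card_pos.mpr (nonempty_support_iff.mpr hT0)
    rw [hsum] at hle
    omega
  obtain ⟨k, x, hx, hTk⟩ := card_support_eq_one.mp hcard
  have hx1 : x = 1 := by
    rw [hTk] at hTe; simpa using hTe
  subst hx1
  refine ⟨k, ?_, ?_⟩
  · rcases Nat.eq_zero_or_pos k with rfl | hk
    · exfalso
      have : T.coeff 0 = 0 := by simp [hT, h0]
      rw [hTk] at this; simp at this
    · exact hk
  · have : S = T + 1 := by ring
    rw [this, hTk]; simp; ring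

lemma pow_bound (m n : ℕ) (v : ℤ) (hv : v ≤ 256) (hE : (1+2^m)*(1+2^n) = v) : m ≤ 7 := by
  by_contra hc
  have h7 : (2:ℤ)^8 ≤ 2^m := pow_le_pow_right₀ (by norm_num) (by omega)
  have h0n : (0:ℤ) ≤ 2^n := by positivity
  nlinarith

lemma no105 (m n : ℕ) (hm : 1 ≤ m) (hn : 1 ≤ n) : (1+2^m)*(1+2^n) ≠ (105:ℤ) := by
  intro h
  have hm6 := pow_bound m n 105 (by norm_num) h
  have hn6 := pow_bound n m 105 (by norm_num) (by linarith [h, mul_comm ((1:ℤ)+2^m) (1+2^n)])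
  interval_cases m <;> interval_cases n <;> norm_num at h

lemma no23 (m n : ℕ) (hm : 1 ≤ m) (hn : 1 ≤ n) : (1+2^m)*(1+2^n) ≠ (23:ℤ) := by
  intro h
  have hm6 := pow_bound m n 23 (by norm_num) h
  have hn6 := pow_bound n m 23 (by norm_num) (by linarith [h, mul_comm ((1:ℤ)+2^m) (1+2^n)])
  interval_cases m <;> interval_cases n <;> norm_num at h

lemma no161 (m n : ℕ) (hm : 1 ≤ m) (hn : 1 ≤ n) : (1+2^m)*(1+2^n) ≠ (161:ℤ) := by
  intro h
  have hm6 := pow_bound m n 161 (by norm_num) h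
  have hn6 := pow_bound n m 161 (by norm_num) (by linarith [h, mul_comm ((1:ℤ)+2^m) (1+2^n)])
  interval_cases m <;> interval_cases n <;> norm_num at h

def IrredNN (P : Polynomial ℤ) : Prop :=
  NNcoeff P ∧ P ≠ 1 ∧
    ∀ S T : Polynomial ℤ, NNcoeff S → NNcoeff T → P = S * T → S = 1 ∨ T = 1

lemma coeff_zero_factors (S T : ℤ[X]) (hS : NNcoeff S) (hT : NNcoeff T)
    (h : S.coeff 0 * T.coeff 0 = 1) : S.coeff 0 = 1 ∧ T.coeff 0 = 1 :=
  ⟨Int.eq_one_of_mul_eq_one_right (hS 0) h,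
   Int.eq_one_of_mul_eq_one_left (hT 0) h⟩

lemma one_le_factors (a b c : ℤ) (ha : 0 ≤ a) (hb : 0 ≤ b) (hc : 1 ≤ c)
    (h : a * b = c) : 1 ≤ a ∧ 1 ≤ b := by
  constructor <;> by_contra hx <;> push_neg at hx
  · have h0 : a = 0 := by omega
    rw [h0] at h; simp at h; omega
  · have h0 : b = 0 := by omega
    rw [h0] at h; simp at h; omega

lemma irredNN_of2 (P : ℤ[X]) (hNN : NNcoeff P) (h0 : P.coeff 0 = 1)
    (h1 : P.eval 1 = 2) : IrredNN P := by
  refine ⟨hNN, fun h => by rw [h] at h1; simp at h1, fun S T hS hT hPST => ?_⟩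
  have hc : S.coeff 0 * T.coeff 0 = 1 := by
    rw [hPST, mul_coeff_zero] at h0; exact h0
  obtain ⟨hS0, hT0⟩ := coeff_zero_factors S T hS hT hc
  have he : S.eval 1 * T.eval 1 = 2 := by
    rw [hPST, eval_mul] at h1; exact h1
  obtain ⟨haS, haT⟩ := one_le_factors _ _ _ (nn_eval1_nonneg S hS)
    (nn_eval1_nonneg T hT) (by norm_num) he
  have : S.eval 1 = 1 ∨ T.eval 1 = 1 := by
    by_contra hx
    push_neg at hx
    have hs : 2 ≤ S.eval 1 := by omega
    have ht : 2 ≤ T.eval 1 := by omega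
    nlinarith
  rcases this with h' | h'
  · exact Or.inl (nn_eq_one S hS hS0 h')
  · exact Or.inr (nn_eq_one T hT hT0 h')

lemma irredNN_of4 (P : ℤ[X]) (hNN : NNcoeff P) (h0 : P.coeff 0 = 1)
    (h1 : P.eval 1 = 4)
    (hno : ∀ m n : ℕ, 1 ≤ m → 1 ≤ n → (1 + X ^ m) * (1 + X ^ n) ≠ P) : IrredNN P := by
  refine ⟨hNN, fun h => by rw [h] at h1; simp at h1, fun S T hS hT hPST => ?_⟩
  have hc : S.coeff 0 * T.coeff 0 = 1 := by
    rw [hPST, mul_coeff_zero] at h0; exact h0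
  obtain ⟨hS0, hT0⟩ := coeff_zero_factors S T hS hT hc
  have he : S.eval 1 * T.eval 1 = 4 := by
    rw [hPST, eval_mul] at h1; exact h1
  obtain ⟨haS, haT⟩ := one_le_factors _ _ _ (nn_eval1_nonneg S hS)
    (nn_eval1_nonneg T hT) (by norm_num) he
  have hS4 : S.eval 1 ≤ 4 := by nlinarith
  have hT4 : T.eval 1 ≤ 4 := by nlinarith
  have hcase : S.eval 1 = 1 ∨ T.eval 1 = 1 ∨ (S.eval 1 = 2 ∧ T.eval 1 = 2) := by
    set a := S.eval 1; set b := T.eval 1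
    interval_cases a <;> omega
  rcases hcase with h' | h' | ⟨hs2, ht2⟩
  · exact Or.inl (nn_eq_one S hS hS0 h')
  · exact Or.inr (nn_eq_one T hT hT0 h')
  · exfalso
    obtain ⟨m, hm, hSm⟩ := nn_eq_one_add_pow S hS hS0 hs2
    obtain ⟨n, hn, hTn⟩ := nn_eq_one_add_pow T hT hT0 ht2
    exact hno m n hm hn (by rw [← hSm, ← hTn]; exact hPST.symm)

lemma noA (m n : ℕ) (hm : 1 ≤ m) (hn : 1 ≤ n) :
    (1 + X ^ m) * (1 + X ^ n) ≠ (1 + X ^ 3 + X ^ 5 + X ^ 6 : ℤ[X]) := by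
  intro hE
  have h2 := congrArg (eval 2) hE
  simp only [eval_mul, eval_add, eval_pow, eval_X, eval_one] at h2
  norm_num at h2
  exact no105 m n hm hn (by linarith)

lemma noB (m n : ℕ) (hm : 1 ≤ m) (hn : 1 ≤ n) :
    (1 + X ^ m) * (1 + X ^ n) ≠ (1 + X + X ^ 2 + X ^ 4 : ℤ[X]) := by
  intro hE
  have h2 := congrArg (eval 2) hE
  simp only [eval_mul, eval_add, eval_pow, eval_X, eval_one] at h2
  norm_num at h2
  exact no23 m n hm hn (by linarith)

lemma noC (m n : ℕ) (hm : 1 ≤ m) (hn : 1 ≤ n) :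
    (1 + X ^ m) * (1 + X ^ n) ≠ (1 + X ^ 4 + X ^ 4 + X ^ 7 : ℤ[X]) := by
  intro hE
  have h2 := congrArg (eval 2) hE
  simp only [eval_mul, eval_add, eval_pow, eval_X, eval_one] at h2
  norm_num at h2
  exact no161 m n hm hn (by linarith)

lemma nnA : NNcoeff (1 + X ^ 3 + X ^ 5 + X ^ 6 : ℤ[X]) := by
  intro n
  simp only [coeff_add, coeff_one, coeff_X_pow]
  split_ifs <;> norm_num

lemma nnB : NNcoeff (1 + X + X ^ 2 + X ^ 4 : ℤ[X]) := by
  intro n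
  simp only [coeff_add, coeff_one, coeff_X_pow, coeff_X]
  split_ifs <;> norm_num

lemma nnC : NNcoeff (1 + X ^ 4 + X ^ 4 + X ^ 7 : ℤ[X]) := by
  intro n
  simp only [coeff_add, coeff_one, coeff_X_pow]
  split_ifs <;> norm_num

lemma nnD : NNcoeff (1 + X : ℤ[X]) := by
  intro n
  simp only [coeff_add, coeff_one, coeff_X]
  split_ifs <;> norm_num

lemma nnE : NNcoeff (1 + X ^ 2 : ℤ[X]) := by
  intro n
  simp only [coeff_add, coeff_one, coeff_X_pow]
  split_ifs <;> norm_num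

theorem stmt18 :
    ∃ l₁ l₂ : List (Polynomial ℤ),
      (∀ Q ∈ l₁, IrredNN Q) ∧ (∀ Q ∈ l₂, IrredNN Q) ∧
      l₁.prod = (1 + X ^ 3 + X ^ 5 + X ^ 6) * (1 + X + X ^ 2 + X ^ 4) ∧
      l₂.prod = (1 + X ^ 3 + X ^ 5 + X ^ 6) * (1 + X + X ^ 2 + X ^ 4) ∧
      l₁.length = 2 ∧ l₂.length = 3 := by
  refine ⟨[1 + X ^ 3 + X ^ 5 + X ^ 6, 1 + X + X ^ 2 + X ^ 4],
    [1 + X, 1 + X ^ 2, 1 + X ^ 4 + X ^ 4 + X ^ 7], ?_, ?_, ?_, ?_, rfl, rfl⟩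
  · intro Q hQ
    simp only [List.mem_cons, List.not_mem_nil, or_false] at hQ
    rcases hQ with rfl | rfl
    · exact irredNN_of4 _ nnA (by simp) (by simp) noA
    · exact irredNN_of4 _ nnB (by simp) (by simp) noB
  · intro Q hQ
    simp only [List.mem_cons, List.not_mem_nil, or_false] at hQ
    rcases hQ with rfl | rfl | rfl
    · exact irredNN_of2 _ nnD (by simp) (by simp)
    · exact irredNN_of2 _ nnE (by simp) (by simp)
    · exact irredNN_of4 _ nnC (by simp) (by simp) noC
  · simp
  · simp only [List.prod_cons, List.prod_nil, mul_one]
    ring
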